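/- arXiv:math/0504438 — 4 statements merged into one kernel-verified Lean document; each statement's English description precedes it below -/
import Mathlib

section
/- Let α and β be types and let F be the free group on the sum type α ⊕ β. Let u be an element of the subgroup of F generated by the generators coming from α, and let v be an element of the subgroup of F generated by the generators coming from β. If u and v are conjugate in F (there exists g ∈ F with g u g⁻¹ = v), then u = 1 and v = 1. -/
lemma freeGroup_closure_range_eq_map_range {γ δ : Type*} (f : δ → γ) :
    Subgroup.closure (Set.range fun y : δ => FreeGroup.of (f y)) =
      (FreeGroup.map f).range := by
  rw [MonoidHom.range_eq_map, ← FreeGroup.closure_range_of δ, MonoidHom.map_closure]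
  congr 1
  ext x
  constructor
  · rintro ⟨y, rfl⟩; exact ⟨FreeGroup.of y, ⟨y, rfl⟩, by simp⟩
  · rintro ⟨z, ⟨y, rfl⟩, rfl⟩; exact ⟨y, by simp⟩

/-- In the free group on a sum type `α ⊕ β`, if an element `u` of the subgroup generated by
the `α`-generators is conjugate to an element `v` of the subgroup generated by the
`β`-generators, then `u = 1` and `v = 1`. -/
theorem freeGroup_sum_conjugate_of_left_right_subgroups_eq_one
    {α β : Type*} (u v : FreeGroup (α ⊕ β))
    (hu : u ∈ Subgroup.closure (Set.range fun x : α => FreeGroup.of (Sum.inl x)))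
    (hv : v ∈ Subgroup.closure (Set.range fun y : β => FreeGroup.of (Sum.inr y)))
    (h : ∃ g : FreeGroup (α ⊕ β), g * u * g⁻¹ = v) :
    u = 1 ∧ v = 1 := by
  rw [freeGroup_closure_range_eq_map_range] at hu hv
  obtain ⟨a, rfl⟩ := hu
  obtain ⟨b, rfl⟩ := hv
  obtain ⟨g, hg⟩ := h
  let φ : FreeGroup (α ⊕ β) →* FreeGroup α :=
    FreeGroup.lift (Sum.elim FreeGroup.of (fun _ => 1))
  let ψ : FreeGroup (α ⊕ β) →* FreeGroup β :=
    FreeGroup.lift (Sum.elim (fun _ => 1) FreeGroup.of)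
  have hφ : φ.comp (FreeGroup.map Sum.inl) = MonoidHom.id _ := by
    ext x; simp [φ]
  have hψ : ψ.comp (FreeGroup.map Sum.inr) = MonoidHom.id _ := by
    ext x; simp [ψ]
  have hφv : φ.comp (FreeGroup.map Sum.inr) = 1 := by
    ext x; simp [φ]
  have hψu : ψ.comp (FreeGroup.map Sum.inl) = 1 := by
    ext x; simp [ψ]
  have hb : b = 1 := by
    have := congrArg ψ hg
    simp only [map_mul, map_inv] at this
    rw [← MonoidHom.comp_apply, hψu, ← MonoidHom.comp_apply, hψ] at this
    simpa using this.symm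
  subst hb
  have ha : a = 1 := by
    have := congrArg φ hg
    simp only [map_mul, map_inv, map_one] at this
    rw [← MonoidHom.comp_apply, hφ, MonoidHom.id_apply, mul_inv_eq_one,
      mul_eq_left] at this
    exact this
  subst ha
  simp
end

section
/- (Itô's theorem) Let G be a group and let A and B be subgroups of G such that both A and B are abelian (any two elements of A commute, and any two elements of B commute) and G = AB, i.e., every element g of G can be written as g = a·b with a ∈ A and b ∈ B. Then G is metabelian: the commutator subgroup [G, G] of G is abelian; equivalently, the second term of the derived series of G is trivial. -/
open scoped commutatorElement

section ItoHelpers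

variable {G : Type*} [Group G]

private lemma ito_conjB (y a₀ b₀ : G) (h : y * b₀ = b₀ * y) :
    y * ⁅a₀, b₀⁆ * y⁻¹ = ⁅y * a₀ * y⁻¹, b₀⁆ := by
  have h1 : y * b₀ * y⁻¹ = b₀ := by rw [h]; group
  calc y * ⁅a₀, b₀⁆ * y⁻¹
      = (y*a₀*y⁻¹) * (y*b₀*y⁻¹) * (y*a₀*y⁻¹)⁻¹ * (y*b₀*y⁻¹)⁻¹ := by group
    _ = (y*a₀*y⁻¹) * b₀ * (y*a₀*y⁻¹)⁻¹ * b₀⁻¹ := by rw [h1]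
    _ = ⁅y*a₀*y⁻¹, b₀⁆ := by rw [commutatorElement_def]

private lemma ito_conjA (x a₀ b₀ : G) (h : x * a₀ = a₀ * x) :
    x * ⁅a₀, b₀⁆ * x⁻¹ = ⁅a₀, x * b₀ * x⁻¹⁆ := by
  have h1 : x * a₀ * x⁻¹ = a₀ := by rw [h]; group
  calc x * ⁅a₀, b₀⁆ * x⁻¹
      = (x*a₀*x⁻¹) * (x*b₀*x⁻¹) * (x*a₀*x⁻¹)⁻¹ * (x*b₀*x⁻¹)⁻¹ := by group
    _ = a₀ * (x*b₀*x⁻¹) * a₀⁻¹ * (x*b₀*x⁻¹)⁻¹ := by rw [h1]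
    _ = ⁅a₀, x*b₀*x⁻¹⁆ := by rw [commutatorElement_def]

private lemma ito_dropR (x w z : G) (h : w * z = z * w) : ⁅x * w, z⁆ = ⁅x, z⁆ := by
  calc ⁅x * w, z⁆ = x*(w*z)*w⁻¹*x⁻¹*z⁻¹ := by group
    _ = x*(z*w)*w⁻¹*x⁻¹*z⁻¹ := by rw [h]
    _ = ⁅x, z⁆ := by group

private lemma ito_dropL (x z w : G) (h : x * w = w * x) : ⁅x, z * w⁆ = ⁅x, z⁆ := by
  have h2 : w * x⁻¹ = x⁻¹ * w := by
    calc w * x⁻¹ = x⁻¹*(x*w)*x⁻¹ := by group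
      _ = x⁻¹*(w*x)*x⁻¹ := by rw [h]
      _ = x⁻¹ * w := by group
  calc ⁅x, z * w⁆ = x*z*(w*x⁻¹)*w⁻¹*z⁻¹ := by group
    _ = x*z*(x⁻¹*w)*w⁻¹*z⁻¹ := by rw [h2]
    _ = ⁅x, z⁆ := by group

private lemma ito_pullL (x z w : G) (h : x * z = z * x) :
    ⁅x, z * w⁆ = z * ⁅x, w⁆ * z⁻¹ := by
  calc ⁅x, z * w⁆ = (x*z)*w*x⁻¹*w⁻¹*z⁻¹ := by group
    _ = (z*x)*w*x⁻¹*w⁻¹*z⁻¹ := by rw [h]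
    _ = z * ⁅x, w⁆ * z⁻¹ := by group

end ItoHelpers

/-- **Itô's theorem.**  If a group `G` is the product `G = A * B` of two abelian
subgroups `A` and `B`, then `G` is metabelian: its commutator subgroup is abelian. -/
theorem ito_metabelian_of_product_of_abelian_subgroups
    {G : Type*} [Group G] (A B : Subgroup G)
    (hA : ∀ a₁ ∈ A, ∀ a₂ ∈ A, a₁ * a₂ = a₂ * a₁)
    (hB : ∀ b₁ ∈ B, ∀ b₂ ∈ B, b₁ * b₂ = b₂ * b₁)
    (hAB : ∀ g : G, ∃ a ∈ A, ∃ b ∈ B, g = a * b) :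
    ∀ x ∈ commutator G, ∀ y ∈ commutator G, x * y = y * x := by
  -- the `B * A` decomposition
  have hBA : ∀ g : G, ∃ b ∈ B, ∃ a ∈ A, g = b * a := by
    intro g
    obtain ⟨a, ha, b, hb, h⟩ := hAB g⁻¹
    refine ⟨b⁻¹, B.inv_mem hb, a⁻¹, A.inv_mem ha, ?_⟩
    rw [← inv_inv g, h, mul_inv_rev]
  -- the set of mixed commutators
  set S : Set G := {g | ∃ a ∈ A, ∃ b ∈ B, g = ⁅a, b⁆} with hSdef
  -- S is closed under conjugation by elements of A
  have lemA : ∀ x ∈ A, ∀ g ∈ S, x * g * x⁻¹ ∈ S := by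
    rintro x hx g ⟨a₀, ha₀, b₀, hb₀, rfl⟩
    obtain ⟨b₂, hb₂, a₂, ha₂, hdec⟩ := hBA (x * b₀ * x⁻¹)
    refine ⟨a₀, ha₀, b₂, hb₂, ?_⟩
    rw [ito_conjA x a₀ b₀ (hA x hx a₀ ha₀), hdec, ito_dropL a₀ b₂ a₂ (hA a₀ ha₀ a₂ ha₂)]
  -- any two elements of S commute (the heart of Itô's argument)
  have key : ∀ s ∈ S, ∀ t ∈ S, s * t = t * s := by
    rintro s ⟨a, ha, b, hb, rfl⟩ t ⟨c, hc, d, hd, rfl⟩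
    obtain ⟨a₁, ha₁, b₁, hb₁, h1⟩ := hAB (d⁻¹ * a * d)
    obtain ⟨b₂, hb₂, a₂, ha₂, h2⟩ := hBA (c⁻¹ * b * c)
    -- step 1 : conjugation by d⁻¹
    have step1 : d⁻¹ * ⁅a, b⁆ * d = ⁅a₁, b⁆ := by
      have e : d⁻¹ * b = b * d⁻¹ := by
        calc d⁻¹ * b = d⁻¹*(b*d)*d⁻¹ := by group
          _ = d⁻¹*(d*b)*d⁻¹ := by rw [hB b hb d hd]
          _ = b * d⁻¹ := by group
      have := ito_conjB d⁻¹ a b e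
      rw [inv_inv] at this
      rw [this, h1,
        ito_dropR a₁ b₁ b (hB b₁ hb₁ b hb)]
    -- step 2 : conjugation by c⁻¹
    have step2 : c⁻¹ * ⁅a₁, b⁆ * c = ⁅a₁, b₂⁆ := by
      have e : c⁻¹ * a₁ = a₁ * c⁻¹ := by
        calc c⁻¹ * a₁ = c⁻¹*(a₁*c)*c⁻¹ := by group
          _ = c⁻¹*(c*a₁)*c⁻¹ := by rw [hA a₁ ha₁ c hc]
          _ = a₁ * c⁻¹ := by group
      have := ito_conjA c⁻¹ a₁ b e
      rw [inv_inv] at this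
      rw [this, h2,
        ito_dropL a₁ b₂ a₂ (hA a₁ ha₁ a₂ ha₂)]
    -- step 3 : conjugation by d
    have step3 : d * ⁅a₁, b₂⁆ * d⁻¹ = ⁅a, b₂⁆ := by
      have e3 : d * a₁ * d⁻¹ = a * b₁⁻¹ := by
        have e1 : a₁ = d⁻¹ * a * d * b₁⁻¹ := by rw [h1]; group
        have e2 : d * b₁⁻¹ = b₁⁻¹ * d := by
          calc d * b₁⁻¹ = b₁⁻¹*(b₁*d)*b₁⁻¹ := by group
            _ = b₁⁻¹*(d*b₁)*b₁⁻¹ := by rw [hB b₁ hb₁ d hd]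
            _ = b₁⁻¹ * d := by group
        calc d * a₁ * d⁻¹ = d*(d⁻¹ * a * d * b₁⁻¹)*d⁻¹ := by rw [e1]
          _ = a*(d*b₁⁻¹)*d⁻¹ := by group
          _ = a*(b₁⁻¹*d)*d⁻¹ := by rw [e2]
          _ = a * b₁⁻¹ := by group
      rw [ito_conjB d a₁ b₂ (hB d hd b₂ hb₂), e3,
        ito_dropR a b₁⁻¹ b₂ (hB b₁⁻¹ (B.inv_mem hb₁) b₂ hb₂)]
    -- step 4 : conjugation by c
    have step4 : c * ⁅a, b₂⁆ * c⁻¹ = ⁅a, b⁆ := by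
      have e4 : c * b₂ * c⁻¹ = b * a₂⁻¹ := by
        have e1 : b₂ = c⁻¹ * b * c * a₂⁻¹ := by rw [h2]; group
        have e2 : c * a₂⁻¹ = a₂⁻¹ * c := by
          calc c * a₂⁻¹ = a₂⁻¹*(a₂*c)*a₂⁻¹ := by group
            _ = a₂⁻¹*(c*a₂)*a₂⁻¹ := by rw [hA a₂ ha₂ c hc]
            _ = a₂⁻¹ * c := by group
        calc c * b₂ * c⁻¹ = c*(c⁻¹ * b * c * a₂⁻¹)*c⁻¹ := by rw [e1]
          _ = b*(c*a₂⁻¹)*c⁻¹ := by group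
          _ = b*(a₂⁻¹*c)*c⁻¹ := by rw [e2]
          _ = b * a₂⁻¹ := by group
      rw [ito_conjA c a b₂ (hA c hc a ha), e4,
        ito_dropL a b a₂⁻¹ (hA a ha a₂⁻¹ (A.inv_mem ha₂))]
    -- combine: ⁅c,d⁆ * ⁅a,b⁆ * ⁅c,d⁆⁻¹ = ⁅a,b⁆
    have comb : ⁅c, d⁆ * ⁅a, b⁆ * ⁅c, d⁆⁻¹
        = c * (d * (c⁻¹ * (d⁻¹ * ⁅a, b⁆ * d) * c) * d⁻¹) * c⁻¹ := by group
    have fix : ⁅c, d⁆ * ⁅a, b⁆ * ⁅c, d⁆⁻¹ = ⁅a, b⁆ := by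
      rw [comb, step1, step2, step3, step4]
    calc ⁅a, b⁆ * ⁅c, d⁆ = (⁅c, d⁆ * ⁅a, b⁆ * ⁅c, d⁆⁻¹) * ⁅c, d⁆ := by rw [fix]
      _ = ⁅c, d⁆ * ⁅a, b⁆ := by group
  -- the commutator subgroup is contained in the closure of S
  have hle : commutator G ≤ Subgroup.closure S := by
    rw [commutator_def]
    rw [Subgroup.commutator_le]
    intro g _ h _
    obtain ⟨a, ha, b, hb, rfl⟩ := hAB g
    obtain ⟨c, hc, d, hd, rfl⟩ := hAB h
    have i1 : ⁅a * b, c * d⁆ = a * ⁅b, c * d⁆ * a⁻¹ * ⁅a, c * d⁆ := by group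
    have i2 : ⁅b, c * d⁆ = ⁅b, c⁆ := ito_dropL b c d (hB b hb d hd)
    have i3 : ⁅a, c * d⁆ = c * ⁅a, d⁆ * c⁻¹ := ito_pullL a c d (hA a ha c hc)
    have i4 : ⁅b, c⁆ = ⁅c, b⁆⁻¹ := (commutatorElement_inv c b).symm
    rw [i1, i2, i3, i4]
    have m1 : a * ⁅c, b⁆ * a⁻¹ ∈ S := lemA a ha _ ⟨c, hc, b, hb, rfl⟩
    have m2 : c * ⁅a, d⁆ * c⁻¹ ∈ S := lemA c hc _ ⟨a, ha, d, hd, rfl⟩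
    have m1' : a * ⁅c, b⁆⁻¹ * a⁻¹ = (a * ⁅c, b⁆ * a⁻¹)⁻¹ := by group
    rw [m1']
    exact Subgroup.mul_mem _ (Subgroup.inv_mem _ (Subgroup.subset_closure m1))
      (Subgroup.subset_closure m2)
  -- elements of `closure S` commute with each element of S
  have hc1 : ∀ s ∈ S, ∀ y ∈ Subgroup.closure S, s * y = y * s := by
    intro s hs y hy
    induction hy using Subgroup.closure_induction with
    | mem t ht => exact key s hs t ht
    | one => rw [mul_one, one_mul]
    | mul x y _ _ ihx ihy =>
        calc s * (x * y) = (s * x) * y := by rw [mul_assoc]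
          _ = x * (s * y) := by rw [ihx, mul_assoc]
          _ = (x * y) * s := by rw [ihy, mul_assoc]
    | inv x _ ih =>
        calc s * x⁻¹ = x⁻¹*(x*s)*x⁻¹ := by group
          _ = x⁻¹*(s*x)*x⁻¹ := by rw [ih]
          _ = x⁻¹ * s := by group
  -- hence `closure S` is commutative
  have hcomm : ∀ x ∈ Subgroup.closure S, ∀ y ∈ Subgroup.closure S, x * y = y * x := by
    intro x hx y hy
    induction hx using Subgroup.closure_induction with
    | mem t ht => exact hc1 t ht y hy
    | one => rw [mul_one, one_mul]
    | mul u v _ _ ihu ihv =>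
        calc (u * v) * y = u * (v * y) := by rw [mul_assoc]
          _ = (u * y) * v := by rw [ihv, ← mul_assoc]
          _ = y * (u * v) := by rw [ihu]; rw [mul_assoc]
    | inv u _ ih =>
        calc u⁻¹ * y = u⁻¹*(y*u)*u⁻¹ := by group
          _ = u⁻¹*(u*y)*u⁻¹ := by rw [← ih]
          _ = y * u⁻¹ := by group
  intro x hx y hy
  exact hcomm x (hle hx) y (hle hy)
end

section
/- Let G be a group and let a, b ∈ G be such that every element g of G can be written as g = a^k · b^l for some integers k and l (that is, G is the product of the two cyclic subgroups generated by a and by b). Then G is metabelian: the commutator subgroup [G, G] is abelian. -/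
open scoped commutatorElement

/-- Every `2`-boundedly generated group is metabelian: if every element of `G` can be
written as `a ^ k * b ^ l` with `k, l ∈ ℤ`, then the commutator subgroup of `G` is
abelian. -/
theorem metabelian_of_two_boundedly_generated
    {G : Type*} [Group G] (a b : G)
    (h : ∀ g : G, ∃ k l : ℤ, g = a ^ k * b ^ l) :
    ∀ x ∈ commutator G, ∀ y ∈ commutator G, x * y = y * x := by
  -- the "B·A" form of the hypothesis
  have hBA : ∀ g : G, ∃ l k : ℤ, g = b ^ l * a ^ k := by
    intro g
    obtain ⟨k, l, hg⟩ := h g⁻¹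
    refine ⟨-l, -k, ?_⟩
    have : g = (a ^ k * b ^ l)⁻¹ := by rw [← hg, inv_inv]
    rw [this]
    group
  -- conjugation by a power of `a` changes only the `b`-coordinate of a commutator,
  -- independently of the `a`-coordinate
  have key1 : ∀ l m : ℤ, ∃ l₁ : ℤ, ∀ k : ℤ,
      (a ^ m)⁻¹ * ⁅a ^ k, b ^ l⁆ * a ^ m = ⁅a ^ k, b ^ l₁⁆ := by
    intro l m
    obtain ⟨l₁, j, hd⟩ := hBA ((a ^ m)⁻¹ * b ^ l * a ^ m)
    refine ⟨l₁, fun k => ?_⟩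
    have hb : b ^ l = a ^ m * (b ^ l₁ * a ^ j) * (a ^ m)⁻¹ := by
      rw [← hd]; group
    rw [commutatorElement_def, commutatorElement_def, hb]
    group
  -- conjugation by a power of `b` changes only the `a`-coordinate of a commutator,
  -- independently of the `b`-coordinate
  have key2 : ∀ k m : ℤ, ∃ k₁ : ℤ, ∀ l : ℤ,
      (b ^ m)⁻¹ * ⁅a ^ k, b ^ l⁆ * b ^ m = ⁅a ^ k₁, b ^ l⁆ := by
    intro k m
    obtain ⟨k₁, j, hd⟩ := h ((b ^ m)⁻¹ * a ^ k * b ^ m)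
    refine ⟨k₁, fun l => ?_⟩
    have ha : a ^ k = b ^ m * (a ^ k₁ * b ^ j) * (b ^ m)⁻¹ := by
      rw [← hd]; group
    rw [commutatorElement_def, commutatorElement_def, ha]
    group
  -- any two commutators of the special form commute (Itô's trick)
  have comm_T : ∀ k l p q : ℤ, ⁅a ^ k, b ^ l⁆ * ⁅a ^ p, b ^ q⁆ = ⁅a ^ p, b ^ q⁆ * ⁅a ^ k, b ^ l⁆ := by
    intro k l p q
    obtain ⟨l₁, h1⟩ := key1 l p
    obtain ⟨l₂, h2⟩ := key1 l₁ (-p)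
    obtain ⟨k₁, h3⟩ := key2 k q
    obtain ⟨k₂, h4⟩ := key2 k₁ (-q)
    -- the `b`-coordinate comes back after conjugating by `a ^ p` then `a ^ (-p)`
    have hLc : ∀ k' : ℤ, ⁅a ^ k', b ^ l₂⁆ = ⁅a ^ k', b ^ l⁆ := by
      intro k'
      have e1 := h1 k'
      have e2 := h2 k'
      rw [← e2, ← e1]
      group
    -- the `a`-coordinate comes back after conjugating by `b ^ q` then `b ^ (-q)`
    have hKc : ∀ l' : ℤ, ⁅a ^ k₂, b ^ l'⁆ = ⁅a ^ k, b ^ l'⁆ := by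
      intro l'
      have e1 := h3 l'
      have e2 := h4 l'
      rw [← e2, ← e1]
      group
    have step : ⁅a ^ p, b ^ q⁆⁻¹ * ⁅a ^ k, b ^ l⁆ * ⁅a ^ p, b ^ q⁆ = ⁅a ^ k₂, b ^ l₂⁆ := by
      have expand : ⁅a ^ p, b ^ q⁆⁻¹ * ⁅a ^ k, b ^ l⁆ * ⁅a ^ p, b ^ q⁆ =
          (b ^ (-q))⁻¹ * ((a ^ (-p))⁻¹ * ((b ^ q)⁻¹ *
            ((a ^ p)⁻¹ * ⁅a ^ k, b ^ l⁆ * a ^ p) * b ^ q) * a ^ (-p)) * b ^ (-q) := by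
        rw [commutatorElement_def, commutatorElement_def]
        group
      rw [expand, h1 k, h3 l₁, h2 k₁, h4 l₂]
    calc ⁅a ^ k, b ^ l⁆ * ⁅a ^ p, b ^ q⁆
        = ⁅a ^ p, b ^ q⁆ * (⁅a ^ p, b ^ q⁆⁻¹ * ⁅a ^ k, b ^ l⁆ * ⁅a ^ p, b ^ q⁆) := by group
      _ = ⁅a ^ p, b ^ q⁆ * ⁅a ^ k, b ^ l⁆ := by rw [step, hKc, hLc]
  -- the set of special commutators and its closure
  set T : Set G := {x | ∃ k l : ℤ, x = ⁅a ^ k, b ^ l⁆} with hT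
  set N : Subgroup G := Subgroup.closure T with hN
  have hmemN : ∀ k l : ℤ, ⁅a ^ k, b ^ l⁆ ∈ N := fun k l =>
    Subgroup.subset_closure ⟨k, l, rfl⟩
  -- conjugates of special commutators are again in N
  have hconjN : ∀ (g : G) (k l : ℤ), g⁻¹ * ⁅a ^ k, b ^ l⁆ * g ∈ N := by
    intro g k l
    obtain ⟨p, q, rfl⟩ := h g
    have expand : (a ^ p * b ^ q)⁻¹ * ⁅a ^ k, b ^ l⁆ * (a ^ p * b ^ q) =
        (b ^ q)⁻¹ * ((a ^ p)⁻¹ * ⁅a ^ k, b ^ l⁆ * a ^ p) * b ^ q := by group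
    obtain ⟨l₁, h1⟩ := key1 l p
    obtain ⟨k₁, h2⟩ := key2 k q
    rw [expand, h1 k, h2 l₁]
    exact hmemN k₁ l₁
  -- the commutator subgroup is contained in N
  have hle : commutator G ≤ N := by
    rw [commutator_def, Subgroup.commutator_le]
    intro g₁ _ g₂ _
    obtain ⟨k, l, rfl⟩ := h g₁
    obtain ⟨p, q, rfl⟩ := h g₂
    have expand : ⁅a ^ k * b ^ l, a ^ p * b ^ q⁆ =
        ((a ^ (-k))⁻¹ * ⁅a ^ p, b ^ l⁆ * a ^ (-k))⁻¹ *
          ((a ^ (-p))⁻¹ * ⁅a ^ k, b ^ q⁆ * a ^ (-p)) := by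
      rw [commutatorElement_def, commutatorElement_def, commutatorElement_def]
      group
    rw [expand]
    exact mul_mem (inv_mem (hconjN _ p l)) (hconjN _ k q)
  -- N is abelian
  have habel : ∀ x ∈ N, ∀ y ∈ N, x * y = y * x := by
    intro x hx y hy
    rw [hN] at hx hy
    refine Subgroup.closure_induction₂
      (p := fun x y _ _ => x * y = y * x) ?_ ?_ ?_ ?_ ?_ ?_ ?_ hx hy
    · rintro u v ⟨k, l, rfl⟩ ⟨p, q, rfl⟩
      exact comm_T k l p q
    · intro z _; rw [one_mul, mul_one]
    · intro z _; rw [one_mul, mul_one]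
    · intro u v z _ _ _ h1 h2
      rw [mul_assoc, h2, ← mul_assoc, h1, mul_assoc]
    · intro u v z _ _ _ h1 h2
      rw [← mul_assoc, h1, mul_assoc, h2, ← mul_assoc]
    · intro u v _ _ hc
      have := congrArg (fun w => u⁻¹ * w * u⁻¹) hc
      simpa [mul_assoc] using this.symm
    · intro u v _ _ hc
      have := congrArg (fun w => v⁻¹ * w * v⁻¹) hc
      simpa [mul_assoc] using this.symm
  intro x hx y hy
  exact habel x (hle hx) y (hle hy)
end

section
/- Let α be a type containing at least two distinct elements and let F be the free group on α. Then F has no solvable subgroup of finite index: if H is a subgroup of F whose index [F : H] is finite, then H is not solvable. In particular, free groups of rank at least 2 are not virtually solvable (hence not virtually polycyclic). -/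
open Equiv Equiv.Perm Subgroup

/-- A free group over a type with two distinct elements is not solvable. -/
theorem freeGroup_not_solvable' {β : Type*} (u v : β) (huv : u ≠ v) :
    ¬ IsSolvable (FreeGroup β) := by
  classical
  intro hsolv
  -- surject onto `Perm (Fin 5)`
  set σ : Perm (Fin 5) := finRotate 5 with hσ
  set τ : Perm (Fin 5) := Equiv.swap 0 (σ 0) with hτ
  let f : β → Perm (Fin 5) := fun z => if z = u then σ else if z = v then τ else 1
  have hfu : f u = σ := by simp [f]
  have hfv : f v = τ := by simp [f, huv.symm]
  have hrange : (FreeGroup.lift f).range = ⊤ := by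
    rw [eq_top_iff, ← closure_cycle_adjacent_swap (isCycle_finRotate (n := 3))
      (support_finRotate (n := 3)) 0, Subgroup.closure_le]
    rintro g hg
    rcases hg with h | h
    · refine ⟨FreeGroup.of u, ?_⟩
      rw [FreeGroup.lift_apply_of, hfu, h]
    · simp only [Set.mem_singleton_iff] at h
      refine ⟨FreeGroup.of v, ?_⟩
      rw [FreeGroup.lift_apply_of, hfv, h, hτ, hσ]
  have hsurj : Function.Surjective (FreeGroup.lift f) :=
    MonoidHom.range_eq_top.mp hrange
  haveI : Group.IsSolvable (FreeGroup β) := hsolv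
  exact Equiv.Perm.fin_5_not_solvable (solvable_of_surjective hsurj)

/-- A free group over a subsingleton is commutative. -/
theorem freeGroup_comm_of_subsingleton {β : Type*} [Subsingleton β]
    (g h : FreeGroup β) : g * h = h * g := by
  have key : ∀ a : β, ∀ k : FreeGroup β, Commute (FreeGroup.of a) k := by
    intro a k
    induction k using FreeGroup.induction_on with
    | C1 => exact Commute.one_right _
    | of b =>
      rw [Subsingleton.elim a b]
    | inv_of b hb => exact hb.inv_right
    | mul p q hp hq => exact hp.mul_right hq
  induction g using FreeGroup.induction_on with
  | C1 => exact (Commute.one_left h)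
  | of a => exact key a h
  | inv_of a ha => exact (Commute.inv_left (key a h))
  | mul p q hp hq => exact Commute.mul_left hp hq

/-- The unipotent matrices as units. -/
def uA : (Matrix (Fin 2) (Fin 2) ℤ)ˣ :=
  ⟨!![1, 1; 0, 1], !![1, -1; 0, 1], by simp [Matrix.mul_fin_two, Matrix.one_fin_two],
    by simp [Matrix.mul_fin_two, Matrix.one_fin_two]⟩

def uB : (Matrix (Fin 2) (Fin 2) ℤ)ˣ :=
  ⟨!![1, 0; 1, 1], !![1, 0; -1, 1], by simp [Matrix.mul_fin_two, Matrix.one_fin_two],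
    by simp [Matrix.mul_fin_two, Matrix.one_fin_two]⟩

theorem uA_pow (m : ℕ) : ((uA ^ m : (Matrix (Fin 2) (Fin 2) ℤ)ˣ) : Matrix (Fin 2) (Fin 2) ℤ)
    = !![1, (m : ℤ); 0, 1] := by
  induction m with
  | zero => simp [Matrix.one_fin_two]
  | succ n ih =>
    rw [pow_succ, Units.val_mul, ih]
    show _ * (uA : Matrix (Fin 2) (Fin 2) ℤ) = _
    rw [show (uA : Matrix (Fin 2) (Fin 2) ℤ) = !![1, 1; 0, 1] from rfl, Matrix.mul_fin_two]
    push_cast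
    norm_num [add_comm]

theorem uB_pow (m : ℕ) : ((uB ^ m : (Matrix (Fin 2) (Fin 2) ℤ)ˣ) : Matrix (Fin 2) (Fin 2) ℤ)
    = !![1, 0; (m : ℤ), 1] := by
  induction m with
  | zero => simp [Matrix.one_fin_two]
  | succ n ih =>
    rw [pow_succ, Units.val_mul, ih]
    show _ * (uB : Matrix (Fin 2) (Fin 2) ℤ) = _
    rw [show (uB : Matrix (Fin 2) (Fin 2) ℤ) = !![1, 0; 1, 1] from rfl, Matrix.mul_fin_two]
    push_cast
    norm_num [add_comm]

/-- powers of the two free generators do not commute. -/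
theorem pow_of_not_commute {α : Type*} (x y : α) (hxy : x ≠ y) {m n : ℕ}
    (hm : 0 < m) (hn : 0 < n) :
    FreeGroup.of x ^ m * FreeGroup.of y ^ n ≠ FreeGroup.of y ^ n * FreeGroup.of x ^ m := by
  classical
  intro hEq
  let f : α → (Matrix (Fin 2) (Fin 2) ℤ)ˣ := fun z => if z = x then uA else if z = y then uB else 1
  have hfx : f x = uA := by simp [f]
  have hfy : f y = uB := by simp [f, hxy.symm]
  have h2 := congrArg (FreeGroup.lift f) hEq
  simp only [map_mul, map_pow, FreeGroup.lift_apply_of, hfx, hfy] at h2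
  have h3 := congrArg (Units.val) h2
  rw [Units.val_mul, Units.val_mul, uA_pow, uB_pow, Matrix.mul_fin_two, Matrix.mul_fin_two] at h3
  have h4 := congrFun (congrFun h3 0) 0
  simp at h4
  rcases h4 with h | h
  · omega
  · omega

/-- A free group of rank at least `2` has no solvable subgroup of finite index;
in particular it is not virtually solvable (hence not virtually polycyclic). -/
theorem freeGroup_no_finite_index_solvable_subgroup
    {α : Type*} (x y : α) (hxy : x ≠ y)
    (H : Subgroup (FreeGroup α)) (hH : H.index ≠ 0) :
    ¬ IsSolvable H := by
  intro hsolv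
  -- `H` is a free group by Nielsen–Schreier
  have e : H ≃* FreeGroup (IsFreeGroup.Generators H) := IsFreeGroup.toFreeGroup H
  have hsolv' : IsSolvable (FreeGroup (IsFreeGroup.Generators H)) :=
    haveI : Group.IsSolvable H := hsolv
    solvable_of_surjective (show Function.Surjective e.toMonoidHom from e.surjective)
  -- hence its generating set is a subsingleton, so `H` is commutative
  have hsub : Subsingleton (IsFreeGroup.Generators H) := by
    by_contra hns
    rw [not_subsingleton_iff_nontrivial] at hns
    obtain ⟨u, v, huv⟩ := hns
    exact freeGroup_not_solvable' u v huv hsolv'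
  have hcomm : ∀ a b : H, a * b = b * a := by
    intro a b
    apply e.injective
    rw [map_mul, map_mul, freeGroup_comm_of_subsingleton]
  -- but `H` contains noncommuting powers of the free generators
  obtain ⟨m, hm, -, hmH⟩ := Subgroup.exists_pow_mem_of_index_ne_zero hH (FreeGroup.of x)
  obtain ⟨n, hn, -, hnH⟩ := Subgroup.exists_pow_mem_of_index_ne_zero hH (FreeGroup.of y)
  have := hcomm ⟨FreeGroup.of x ^ m, hmH⟩ ⟨FreeGroup.of y ^ n, hnH⟩
  rw [Subtype.ext_iff] at this
  exact pow_of_not_commute x y hxy hm hn this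
end
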